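/- The kernel P_X is Π_X-reversible and positive. If, for each y, H_{2|y} is Π_{X|Y}(·|y)-reversible and positive, then P̄_X is Π_X-reversible and positive. -/

import Mathlib

open MeasureTheory ENNReal ProbabilityTheory

noncomputable section

/-- Reversibility of a kernel `k` with respect to `ν`. -/
def KernelReversible {α : Type*} [MeasurableSpace α] (ν : Measure α) (k : α → Measure α) : Prop :=
  ∀ A B : Set α, MeasurableSet A → MeasurableSet B →
    ∫⁻ x in A, k x B ∂ν = ∫⁻ x in B, k x A ∂ν

/-- Positivity of a kernel `k` with respect to `ν`. -/
def KernelPositive {α : Type*} [MeasurableSpace α] (ν : Measure α) (k : α → Measure α) : Prop :=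
  ∀ f : α → ℝ, MemLp f 2 ν → 0 ≤ ∫ x, (∫ y, f y ∂(k x)) * f x ∂ν

section Helpers

variable {α β : Type*} [MeasurableSpace α] [MeasurableSpace β]

lemma bind_mk_left (μ : Measure α) [SFinite μ] (K : Kernel α β) [IsSFiniteKernel K] :
    μ.bind (fun a => (K a).map (fun b => (a, b))) = μ ⊗ₘ K := by
  have hmeas : Measurable fun a => (K a).map (fun b => (a, b)) := by
    rw [Measure.measurable_measure]
    intro s hs
    simp_rw [Measure.map_apply measurable_prodMk_left hs]
    exact Kernel.measurable_kernel_prodMk_left hs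
  ext s hs
  rw [Measure.bind_apply hs hmeas.aemeasurable, Measure.compProd_apply hs]
  exact lintegral_congr fun a => by
    rw [Measure.map_apply measurable_prodMk_left hs]

lemma bind_mk_right (μ : Measure α) [SFinite μ] (K : Kernel α β) [IsSFiniteKernel K] :
    μ.bind (fun a => (K a).map (fun b => (b, a))) = (μ ⊗ₘ K).map Prod.swap := by
  have hm : ∀ a : α, Measurable fun b : β => (b, a) :=
    fun a => measurable_id.prodMk measurable_const
  have hmeas : Measurable fun a => (K a).map (fun b => (b, a)) := by
    rw [Measure.measurable_measure]
    intro s hs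
    simp_rw [Measure.map_apply (hm _) hs]
    exact Kernel.measurable_kernel_prodMk_right hs
  ext s hs
  rw [Measure.map_apply measurable_swap hs, Measure.compProd_apply (measurable_swap hs),
    Measure.bind_apply hs hmeas.aemeasurable]
  exact lintegral_congr fun a => by
    rw [Measure.map_apply (hm _) hs]; rfl

variable {X Y : Type*} [MeasurableSpace X] [MeasurableSpace Y]

lemma main_lemma
    (π : Measure (X × Y)) [IsProbabilityMeasure π]
    (κ : X → Measure Y) (hκmeas : Measurable κ) (hκprob : ∀ x, IsProbabilityMeasure (κ x))
    (η : Y → Measure X) (hηmeas : Measurable η) (hηprob : ∀ y, IsProbabilityMeasure (η y))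
    (hκdis : π = (π.fst).bind (fun x => (κ x).map (fun y => (x, y))))
    (hηdis : π = (π.snd).bind (fun y => (η y).map (fun x => (x, y))))
    (KH₂ : X × Y → Measure X) (hKH₂meas : Measurable KH₂)
    (hKH₂prob : ∀ p, IsProbabilityMeasure (KH₂ p))
    (hrev : ∀ y, KernelReversible (η y) (fun x => KH₂ (x, y)))
    (hpos : ∀ y, KernelPositive (η y) (fun x => KH₂ (x, y))) :
    KernelReversible π.fst (fun x => (κ x).bind (fun y => KH₂ (x, y))) ∧
      KernelPositive π.fst (fun x => (κ x).bind (fun y => KH₂ (x, y))) := by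
  -- kernels
  let Kκ : Kernel X Y := ⟨κ, hκmeas⟩
  haveI : IsMarkovKernel Kκ := ⟨hκprob⟩
  let Kη : Kernel Y X := ⟨η, hηmeas⟩
  haveI : IsMarkovKernel Kη := ⟨hηprob⟩
  have hπ1 : π = π.fst ⊗ₘ Kκ := hκdis.trans (bind_mk_left π.fst Kκ)
  have hπ2 : π = (π.snd ⊗ₘ Kη).map Prod.swap := hηdis.trans (bind_mk_right π.snd Kη)
  -- disintegration identities for lintegrals
  have LX : ∀ F : X × Y → ℝ≥0∞, Measurable F →
      ∫⁻ p, F p ∂π = ∫⁻ x, ∫⁻ y, F (x, y) ∂κ x ∂π.fst := by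
    intro F hF
    conv_lhs => rw [hπ1]
    rw [Measure.lintegral_compProd hF]
    rfl
  have LY : ∀ F : X × Y → ℝ≥0∞, Measurable F →
      ∫⁻ p, F p ∂π = ∫⁻ y, ∫⁻ x, F (x, y) ∂η y ∂π.snd := by
    intro F hF
    conv_lhs => rw [hπ2]
    rw [lintegral_map hF measurable_swap,
      Measure.lintegral_compProd (show Measurable fun q : Y × X => F q.swap from
        hF.comp measurable_swap)]
    rfl
  have hchain : ∀ F : X × Y → ℝ≥0∞, Measurable F →
      ∫⁻ x, ∫⁻ y, F (x, y) ∂κ x ∂π.fst = ∫⁻ y, ∫⁻ x, F (x, y) ∂η y ∂π.snd :=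
    fun F hF => (LX F hF).symm.trans (LY F hF)
  have hfstL : ∀ h : X → ℝ≥0∞, Measurable h →
      ∫⁻ x, h x ∂π.fst = ∫⁻ y, ∫⁻ x, h x ∂η y ∂π.snd := by
    intro h hh
    have e : ∫⁻ x, h x ∂π.fst = ∫⁻ p, h p.1 ∂π := lintegral_map hh measurable_fst
    rw [e, LY (fun p => h p.1) (hh.comp measurable_fst)]
  -- per-y kernels and swap invariance
  let M : Y → Kernel X X := fun y =>
    ⟨fun x => KH₂ (x, y), hKH₂meas.comp (measurable_id.prodMk measurable_const)⟩
  have hM : ∀ y, IsMarkovKernel (M y) := fun y => ⟨fun x => hKH₂prob (x, y)⟩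
  have hswap : ∀ y, (η y ⊗ₘ M y).map Prod.swap = η y ⊗ₘ M y := by
    intro y
    haveI := hM y
    haveI := hηprob y
    haveI : IsProbabilityMeasure ((η y ⊗ₘ M y).map Prod.swap) :=
      Measure.isProbabilityMeasure_map measurable_swap.aemeasurable
    refine ext_of_generate_finite _ generateFrom_prod.symm isPiSystem_prod ?_ (by simp)
    rintro s ⟨A, hA, B, hB, rfl⟩
    have hA' : MeasurableSet A := hA
    have hB' : MeasurableSet B := hB
    have hpre : Prod.swap ⁻¹' (A ×ˢ B) = B ×ˢ A := by
      ext p; simp [Set.mem_prod, and_comm]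
    rw [Measure.map_apply measurable_swap (hA'.prod hB'), hpre,
      Measure.compProd_apply_prod hB' hA', Measure.compProd_apply_prod hA' hB']
    exact (hrev y A B hA' hB').symm
  have hswapL : ∀ (y : Y) (h₂ : X × X → ℝ≥0∞), Measurable h₂ →
      ∫⁻ x, ∫⁻ x', h₂ (x, x') ∂KH₂ (x, y) ∂η y
        = ∫⁻ x, ∫⁻ x', h₂ (x', x) ∂KH₂ (x, y) ∂η y := by
    intro y h₂ hh₂
    haveI := hM y
    have e1 : ∫⁻ x, ∫⁻ x', h₂ (x, x') ∂KH₂ (x, y) ∂η y = ∫⁻ p, h₂ p ∂(η y ⊗ₘ M y) := by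
      rw [Measure.lintegral_compProd hh₂]; rfl
    have e2 : ∫⁻ p, h₂ p ∂(η y ⊗ₘ M y) = ∫⁻ p, h₂ (Prod.swap p) ∂(η y ⊗ₘ M y) := by
      conv_lhs => rw [← hswap y]
      rw [lintegral_map hh₂ measurable_swap]
    rw [e1, e2,
      Measure.lintegral_compProd (show Measurable fun p : X × X => h₂ p.swap from
        hh₂.comp measurable_swap)]
    rfl
  have hinv_y : ∀ (y : Y) (h : X → ℝ≥0∞), Measurable h →
      ∫⁻ x, (∫⁻ x', h x' ∂KH₂ (x, y)) ∂η y = ∫⁻ x, h x ∂η y := by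
    intro y h hh
    rw [hswapL y (fun p => h p.2) (hh.comp measurable_snd)]
    refine lintegral_congr fun x => ?_
    simp [lintegral_const, (hKH₂prob (x, y)).measure_univ]
  -- the kernel application
  have happ : ∀ (x : X) (s : Set X), MeasurableSet s →
      ((κ x).bind (fun y => KH₂ (x, y))) s = ∫⁻ y, KH₂ (x, y) s ∂κ x :=
    fun x s hs => Measure.bind_apply hs (hKH₂meas.comp measurable_prodMk_left).aemeasurable
  -- key reversibility computation
  have hkey : ∀ A B : Set X, MeasurableSet A → MeasurableSet B →
      ∫⁻ x in A, ((κ x).bind (fun y => KH₂ (x, y))) B ∂π.fst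
        = ∫⁻ y, ∫⁻ x in A, KH₂ (x, y) B ∂η y ∂π.snd := by
    intro A B hA hB
    have hFm : Measurable fun p : X × Y => A.indicator (fun _ => (1 : ℝ≥0∞)) p.1 * KH₂ p B :=
      ((measurable_const.indicator hA).comp measurable_fst).mul
        ((Measure.measurable_coe hB).comp hKH₂meas)
    calc ∫⁻ x in A, ((κ x).bind (fun y => KH₂ (x, y))) B ∂π.fst
        = ∫⁻ x in A, ∫⁻ y, KH₂ (x, y) B ∂κ x ∂π.fst :=
          setLIntegral_congr_fun hA (fun x _ => happ x B hB)
      _ = ∫⁻ x, A.indicator (fun x => ∫⁻ y, KH₂ (x, y) B ∂κ x) x ∂π.fst :=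
          (lintegral_indicator hA _).symm
      _ = ∫⁻ x, ∫⁻ y, A.indicator (fun _ => (1 : ℝ≥0∞)) x * KH₂ (x, y) B ∂κ x ∂π.fst := by
          refine lintegral_congr fun x => ?_
          by_cases hx : x ∈ A
          · simp [Set.indicator_of_mem hx]
          · simp [Set.indicator_of_notMem hx]
      _ = ∫⁻ y, ∫⁻ x, A.indicator (fun _ => (1 : ℝ≥0∞)) x * KH₂ (x, y) B ∂η y ∂π.snd :=
          hchain _ hFm
      _ = ∫⁻ y, ∫⁻ x in A, KH₂ (x, y) B ∂η y ∂π.snd := by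
          refine lintegral_congr fun y => ?_
          rw [← lintegral_indicator hA]
          refine lintegral_congr fun x => ?_
          by_cases hx : x ∈ A
          · simp [Set.indicator_of_mem hx]
          · simp [Set.indicator_of_notMem hx]
  constructor
  · intro A B hA hB
    rw [hkey A B hA hB, hkey B A hB hA]
    exact lintegral_congr fun y => hrev y A B hA hB
  · -- Positivity
    intro f hf
    obtain ⟨g, hg_sm, hfg⟩ := hf.1
    have hg_meas : Measurable g := hg_sm.measurable
    have hgL2 : MemLp g 2 π.fst := hf.ae_eq hfg
    have hgInt : Integrable g π.fst := hgL2.integrable one_le_two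
    have hg2Int : Integrable (fun x => g x ^ 2) π.fst :=
      (memLp_two_iff_integrable_sq hg_sm.aestronglyMeasurable).mp hgL2
    set G2 : X → ℝ≥0∞ := fun x => (‖g x‖₊ : ℝ≥0∞) ^ 2 with hG2def
    have hG2meas : Measurable G2 := hg_meas.nnnorm.coe_nnreal_ennreal.pow_const 2
    have hG2eq : ∀ x : X, (‖g x ^ 2‖₊ : ℝ≥0∞) = G2 x := by
      intro x; rw [hG2def]; rw [nnnorm_pow]; push_cast; ring
    have hG2fin : ∫⁻ x, G2 x ∂π.fst < ∞ := by
      have h2 := hg2Int.2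
      rw [HasFiniteIntegral] at h2
      simpa only [enorm_eq_nnnorm, hG2eq] using h2
    -- measurability of the integral kernel J
    let KH : Kernel (X × Y) X := ⟨KH₂, hKH₂meas⟩
    haveI : IsMarkovKernel KH := ⟨hKH₂prob⟩
    set J : X × Y → ℝ := fun p => ∫ x', g x' ∂KH₂ p with hJdef
    have hJ_sm : StronglyMeasurable J :=
      StronglyMeasurable.integral_kernel_prod_right (κ := KH)
        (hg_sm.comp_measurable measurable_snd)
    -- Jensen / Cauchy-Schwarz bound
    have hJsq : ∀ p : X × Y, (‖J p‖₊ : ℝ≥0∞) ^ 2 ≤ ∫⁻ x', G2 x' ∂KH₂ p := by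
      intro p
      haveI := hKH₂prob p
      have h1 : (‖J p‖₊ : ℝ≥0∞) ≤ ∫⁻ x', (‖g x'‖₊ : ℝ≥0∞) ∂KH₂ p :=
        enorm_integral_le_lintegral_enorm _
      have hconj : Real.HolderConjugate 2 2 := Real.HolderConjugate.two_two
      have h2 := ENNReal.lintegral_mul_le_Lp_mul_Lq (KH₂ p) hconj
        (f := fun x' => (‖g x'‖₊ : ℝ≥0∞)) (g := fun _ => (1 : ℝ≥0∞))
        hg_meas.nnnorm.coe_nnreal_ennreal.aemeasurable aemeasurable_const
      simp only [Pi.mul_apply, mul_one, ENNReal.one_rpow, lintegral_const, measure_univ,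
        ENNReal.one_rpow, one_mul] at h2
      have h3 : (∫⁻ x', (‖g x'‖₊ : ℝ≥0∞) ^ (2 : ℝ) ∂KH₂ p) = ∫⁻ x', G2 x' ∂KH₂ p := by
        refine lintegral_congr fun x' => ?_
        simp only [hG2def]
        rw [← ENNReal.rpow_natCast (‖g x'‖₊ : ℝ≥0∞) 2]
        norm_num
      rw [h3] at h2
      calc (‖J p‖₊ : ℝ≥0∞) ^ 2
          ≤ ((∫⁻ x', G2 x' ∂KH₂ p) ^ (1 / 2 : ℝ)) ^ 2 := by
            exact pow_le_pow_left' (h1.trans h2) 2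
        _ = ∫⁻ x', G2 x' ∂KH₂ p := by
            rw [← ENNReal.rpow_natCast ((∫⁻ x', G2 x' ∂KH₂ p) ^ (1 / 2 : ℝ)) 2,
              ← ENNReal.rpow_mul]
            norm_num
    -- finiteness of ∫ J², ∫ G2 ∘ fst over π
    have hinvW : Measurable fun p : X × Y => ∫⁻ x', G2 x' ∂KH₂ p :=
      (Measure.measurable_lintegral hG2meas).comp hKH₂meas
    have hJ2fin : ∫⁻ p, (‖J p‖₊ : ℝ≥0∞) ^ 2 ∂π < ∞ := by
      calc ∫⁻ p, (‖J p‖₊ : ℝ≥0∞) ^ 2 ∂π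
          ≤ ∫⁻ p, ∫⁻ x', G2 x' ∂KH₂ p ∂π := lintegral_mono hJsq
        _ = ∫⁻ y, ∫⁻ x, (∫⁻ x', G2 x' ∂KH₂ (x, y)) ∂η y ∂π.snd :=
            LY (fun p => ∫⁻ x', G2 x' ∂KH₂ p) hinvW
        _ = ∫⁻ y, ∫⁻ x, G2 x ∂η y ∂π.snd := lintegral_congr fun y => hinv_y y G2 hG2meas
        _ = ∫⁻ x, G2 x ∂π.fst := (hfstL G2 hG2meas).symm
        _ < ∞ := hG2fin
    have hgfst2 : ∫⁻ p, G2 p.1 ∂π < ∞ := by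
      have e : ∫⁻ x, G2 x ∂π.fst = ∫⁻ p, G2 p.1 ∂π := lintegral_map hG2meas measurable_fst
      rw [← e]; exact hG2fin
    -- the two-variable integrand
    set Φ : X × Y → ℝ := fun p => J p * g p.1 with hΦdef
    have hΦ_sm : StronglyMeasurable Φ := hJ_sm.mul (hg_sm.comp_measurable measurable_fst)
    have hΦint : Integrable Φ π := by
      refine ⟨hΦ_sm.aestronglyMeasurable, ?_⟩
      rw [HasFiniteIntegral]
      have hbound : ∀ p : X × Y, (‖Φ p‖₊ : ℝ≥0∞) ≤ (‖J p‖₊ : ℝ≥0∞) ^ 2 + G2 p.1 := by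
        intro p
        have he : (‖Φ p‖₊ : ℝ≥0∞) = (‖J p‖₊ : ℝ≥0∞) * (‖g p.1‖₊ : ℝ≥0∞) := by
          rw [hΦdef]; simp [nnnorm_mul]
        rw [he]
        rcases le_total ((‖J p‖₊ : ℝ≥0∞)) ((‖g p.1‖₊ : ℝ≥0∞)) with h | h
        · calc (‖J p‖₊ : ℝ≥0∞) * ‖g p.1‖₊ ≤ (‖g p.1‖₊ : ℝ≥0∞) * ‖g p.1‖₊ :=
              mul_le_mul_left h _
            _ = G2 p.1 := by simp only [hG2def, sq]
            _ ≤ (‖J p‖₊ : ℝ≥0∞) ^ 2 + G2 p.1 := le_add_self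
        · calc (‖J p‖₊ : ℝ≥0∞) * ‖g p.1‖₊ ≤ (‖J p‖₊ : ℝ≥0∞) * ‖J p‖₊ :=
              mul_le_mul_right h _
            _ = (‖J p‖₊ : ℝ≥0∞) ^ 2 := (sq _).symm
            _ ≤ (‖J p‖₊ : ℝ≥0∞) ^ 2 + G2 p.1 := le_self_add
      calc ∫⁻ p, (‖Φ p‖₊ : ℝ≥0∞) ∂π
          ≤ ∫⁻ p, ((‖J p‖₊ : ℝ≥0∞) ^ 2 + G2 p.1) ∂π := lintegral_mono hbound
        _ = ∫⁻ p, (‖J p‖₊ : ℝ≥0∞) ^ 2 ∂π + ∫⁻ p, G2 p.1 ∂π :=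
            lintegral_add_left (hJ_sm.measurable.nnnorm.coe_nnreal_ennreal.pow_const 2) _
        _ < ∞ := ENNReal.add_lt_top.mpr ⟨hJ2fin, hgfst2⟩
    -- a.e. transfer of f = g to the kernel measures
    obtain ⟨N, hNsub, hNmeas, hN0⟩ := exists_measurable_superset_of_null (ae_iff.mp hfg)
    have hkmeasN : ∀ s : Set X, MeasurableSet s →
        Measurable fun x => ((κ x).bind (fun y => KH₂ (x, y))) s := by
      intro s hs
      have e : (fun x => ((κ x).bind (fun y => KH₂ (x, y))) s)
          = fun x => ∫⁻ y, KH₂ (x, y) s ∂κ x :=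
        funext fun x => happ x s hs
      rw [e]
      exact Measurable.lintegral_kernel_prod_right (κ := Kκ)
        (f := fun x y => KH₂ (x, y) s) ((Measure.measurable_coe hs).comp hKH₂meas)
    -- invariance of π.fst under the composed kernel (lintegral form)
    have hkinv : ∀ h : X → ℝ≥0∞, Measurable h →
        ∫⁻ x, ∫⁻ x', h x' ∂((κ x).bind (fun y => KH₂ (x, y))) ∂π.fst
          = ∫⁻ x, h x ∂π.fst := by
      intro h hh
      have hbind : ∀ x, ∫⁻ x', h x' ∂((κ x).bind (fun y => KH₂ (x, y)))
          = ∫⁻ y, ∫⁻ x', h x' ∂KH₂ (x, y) ∂κ x :=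
        fun x => Measure.lintegral_bind (hKH₂meas.comp measurable_prodMk_left).aemeasurable hh.aemeasurable
      have hWm : Measurable fun p : X × Y => ∫⁻ x', h x' ∂KH₂ p :=
        (Measure.measurable_lintegral hh).comp hKH₂meas
      calc ∫⁻ x, ∫⁻ x', h x' ∂((κ x).bind (fun y => KH₂ (x, y))) ∂π.fst
          = ∫⁻ x, ∫⁻ y, (∫⁻ x', h x' ∂KH₂ (x, y)) ∂κ x ∂π.fst :=
            lintegral_congr fun x => hbind x
        _ = ∫⁻ y, ∫⁻ x, (∫⁻ x', h x' ∂KH₂ (x, y)) ∂η y ∂π.snd :=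
            hchain (fun p => ∫⁻ x', h x' ∂KH₂ p) hWm
        _ = ∫⁻ y, ∫⁻ x, h x ∂η y ∂π.snd := lintegral_congr fun y => hinv_y y h hh
        _ = ∫⁻ x, h x ∂π.fst := (hfstL h hh).symm
    have hkN : ∀ᵐ x ∂π.fst, ((κ x).bind (fun y => KH₂ (x, y))) N = 0 := by
      have h1 : ∫⁻ x, ((κ x).bind (fun y => KH₂ (x, y))) N ∂π.fst = π.fst N := by
        have := hkinv (N.indicator (1 : X → ℝ≥0∞)) (measurable_one.indicator hNmeas)
        calc ∫⁻ x, ((κ x).bind (fun y => KH₂ (x, y))) N ∂π.fst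
            = ∫⁻ x, ∫⁻ x', N.indicator (1 : X → ℝ≥0∞) x' ∂((κ x).bind (fun y => KH₂ (x, y))) ∂π.fst := by
              refine lintegral_congr fun x => ?_
              rw [lintegral_indicator_one hNmeas]
          _ = ∫⁻ x, N.indicator (1 : X → ℝ≥0∞) x ∂π.fst := this
          _ = π.fst N := lintegral_indicator_one hNmeas
      have h0 : ∫⁻ x, ((κ x).bind (fun y => KH₂ (x, y))) N ∂π.fst = 0 := by rw [h1, hN0]
      have := (lintegral_eq_zero_iff (hkmeasN N hNmeas)).mp h0
      filter_upwards [this] with x hx using hx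
    have hfg_k : ∀ᵐ x ∂π.fst, f =ᵐ[(κ x).bind (fun y => KH₂ (x, y))] g := by
      filter_upwards [hkN] with x hx
      refine ae_iff.mpr (measure_mono_null ?_ hx)
      exact fun a ha => hNsub ha
    -- a.e. integrability of g w.r.t. the composed kernel
    have hGn : Measurable fun x : X => (‖g x‖₊ : ℝ≥0∞) := hg_meas.nnnorm.coe_nnreal_ennreal
    have hintk_meas : Measurable fun x =>
        ∫⁻ x', (‖g x'‖₊ : ℝ≥0∞) ∂((κ x).bind (fun y => KH₂ (x, y))) := by
      have e : (fun x => ∫⁻ x', (‖g x'‖₊ : ℝ≥0∞) ∂((κ x).bind (fun y => KH₂ (x, y))))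
          = fun x => ∫⁻ y, (∫⁻ x', (‖g x'‖₊ : ℝ≥0∞) ∂KH₂ (x, y)) ∂κ x :=
        funext fun x => Measure.lintegral_bind (hKH₂meas.comp measurable_prodMk_left).aemeasurable hGn.aemeasurable
      rw [e]
      exact Measurable.lintegral_kernel_prod_right (κ := Kκ)
        (f := fun x y => ∫⁻ x', (‖g x'‖₊ : ℝ≥0∞) ∂KH₂ (x, y))
        ((Measure.measurable_lintegral hGn).comp hKH₂meas)
    have hfin_ae : ∀ᵐ x ∂π.fst,
        ∫⁻ x', (‖g x'‖₊ : ℝ≥0∞) ∂((κ x).bind (fun y => KH₂ (x, y))) < ∞ := by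
      refine ae_lt_top hintk_meas ?_
      rw [hkinv _ hGn]
      exact hgInt.2.ne
    -- a.e. identity for the Bochner integral over the composed kernel
    have hbindInt : ∀ᵐ x ∂π.fst,
        ∫ x', g x' ∂((κ x).bind (fun y => KH₂ (x, y))) = ∫ y, J (x, y) ∂κ x := by
      filter_upwards [hfin_ae] with x hx
      let Mx : Kernel Y X := ⟨fun y => KH₂ (x, y), hKH₂meas.comp measurable_prodMk_left⟩
      haveI : IsMarkovKernel Mx := ⟨fun y => hKH₂prob (x, y)⟩
      haveI := hκprob x
      have hbind_eq : (κ x).bind (fun y => KH₂ (x, y)) = ((κ x) ⊗ₘ Mx).map Prod.snd := by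
        ext s hs
        rw [Measure.map_apply measurable_snd hs, Measure.compProd_apply (measurable_snd hs),
          Measure.bind_apply hs (show Measurable fun y => KH₂ (x, y) from
            hKH₂meas.comp measurable_prodMk_left).aemeasurable]
        rfl
      have hInt : Integrable (fun p : Y × X => g p.2) ((κ x) ⊗ₘ Mx) := by
        refine ⟨(hg_sm.comp_measurable measurable_snd).aestronglyMeasurable, ?_⟩
        rw [HasFiniteIntegral]
        have e : ∫⁻ p, (‖g p.2‖₊ : ℝ≥0∞) ∂((κ x) ⊗ₘ Mx)
            = ∫⁻ x', (‖g x'‖₊ : ℝ≥0∞) ∂((κ x).bind (fun y => KH₂ (x, y))) := by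
          rw [hbind_eq, lintegral_map hGn measurable_snd]
        exact lt_of_eq_of_lt e hx
      calc ∫ x', g x' ∂((κ x).bind (fun y => KH₂ (x, y)))
          = ∫ p, g p.2 ∂((κ x) ⊗ₘ Mx) := by
            rw [hbind_eq, integral_map measurable_snd.aemeasurable hg_sm.aestronglyMeasurable]
        _ = ∫ y, ∫ x', g x' ∂(Mx y) ∂κ x := Measure.integral_compProd hInt
        _ = ∫ y, J (x, y) ∂κ x := rfl
    -- reduce the goal to Φ
    have hcongr : ∫ x, (∫ x', f x' ∂((κ x).bind (fun y => KH₂ (x, y)))) * f x ∂π.fst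
        = ∫ x, (∫ y, J (x, y) ∂κ x) * g x ∂π.fst := by
      refine integral_congr_ae ?_
      filter_upwards [hfg_k, hbindInt, hfg] with x h1 h2 h3
      rw [h3, integral_congr_ae h1, h2]
    have hstep2 : ∫ x, (∫ y, J (x, y) ∂κ x) * g x ∂π.fst = ∫ p, Φ p ∂π := by
      have hΦc : Integrable Φ (π.fst ⊗ₘ Kκ) := by rw [← hπ1]; exact hΦint
      have e := Measure.integral_compProd hΦc
      conv_rhs => rw [hπ1]
      rw [e]
      refine integral_congr_ae (ae_of_all _ fun x => ?_)
      exact (integral_mul_const _ _).symm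
    have hstep3 : ∫ p, Φ p ∂π = ∫ y, ∫ x, Φ (x, y) ∂η y ∂π.snd := by
      have hΦ2 : Integrable (fun q : Y × X => Φ (q.2, q.1)) (π.snd ⊗ₘ Kη) := by
        have h1 : Integrable Φ ((π.snd ⊗ₘ Kη).map Prod.swap) := by rw [← hπ2]; exact hΦint
        exact (integrable_map_measure hΦ_sm.aestronglyMeasurable
          measurable_swap.aemeasurable).mp h1
      conv_lhs => rw [hπ2]
      rw [integral_map measurable_swap.aemeasurable hΦ_sm.aestronglyMeasurable]
      have e := Measure.integral_compProd hΦ2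
      calc ∫ q, Φ q.swap ∂(π.snd ⊗ₘ Kη)
          = ∫ y, ∫ x, Φ (x, y) ∂(Kη y) ∂π.snd := e
        _ = ∫ y, ∫ x, Φ (x, y) ∂η y ∂π.snd := rfl
    -- a.e. positivity in y
    have hMem_ae : ∀ᵐ y ∂π.snd, MemLp g 2 (η y) := by
      have hmeasy : Measurable fun y => ∫⁻ x, G2 x ∂η y :=
        (Measure.measurable_lintegral hG2meas).comp hηmeas
      have hfiny : ∀ᵐ y ∂π.snd, ∫⁻ x, G2 x ∂η y < ∞ := by
        refine ae_lt_top hmeasy ?_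
        rw [← hfstL G2 hG2meas]
        exact hG2fin.ne
      filter_upwards [hfiny] with y hy
      refine (memLp_two_iff_integrable_sq hg_sm.aestronglyMeasurable).mpr
        ⟨((hg_meas.pow_const 2).stronglyMeasurable).aestronglyMeasurable, ?_⟩
      rw [HasFiniteIntegral]
      simpa only [enorm_eq_nnnorm, hG2eq] using hy
    have hpos_ae : ∀ᵐ y ∂π.snd, 0 ≤ ∫ x, Φ (x, y) ∂η y := by
      filter_upwards [hMem_ae] with y hy
      exact hpos y g hy
    rw [hcongr, hstep2, hstep3]
    exact integral_nonneg_of_ae hpos_ae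


end Helpers

variable {X Y : Type*} [MeasurableSpace X] [MeasurableSpace Y]

/-- `P_X` is `Π_X`-reversible and positive; if for each `y` the kernel
`H_{2|y}` is `Π_{X|Y}(·|y)`-reversible and positive, then `P̄_X` is `Π_X`-reversible and
positive. -/
theorem stmt15
    (π : Measure (X × Y)) [IsProbabilityMeasure π]
    (κ : X → Measure Y) (hκmeas : Measurable κ) (hκprob : ∀ x, IsProbabilityMeasure (κ x))
    (η : Y → Measure X) (hηmeas : Measurable η) (hηprob : ∀ y, IsProbabilityMeasure (η y))
    (hκdis : π = (π.fst).bind (fun x => (κ x).map (fun y => (x, y))))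
    (hηdis : π = (π.snd).bind (fun y => (η y).map (fun x => (x, y))))
    (KH₂ : X × Y → Measure X) (hKH₂meas : Measurable KH₂)
    (hKH₂prob : ∀ p, IsProbabilityMeasure (KH₂ p)) :
    (KernelReversible π.fst (fun x => (κ x).bind η) ∧
      KernelPositive π.fst (fun x => (κ x).bind η)) ∧
    ((∀ y, KernelReversible (η y) (fun x => KH₂ (x, y)) ∧
        KernelPositive (η y) (fun x => KH₂ (x, y))) →
      KernelReversible π.fst (fun x => (κ x).bind (fun y => KH₂ (x, y))) ∧
        KernelPositive π.fst (fun x => (κ x).bind (fun y => KH₂ (x, y)))) := by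
  constructor
  · have hrev0 : ∀ y, KernelReversible (η y) (fun x => (fun p : X × Y => η p.2) (x, y)) := by
      intro y A B hA hB
      simp only []
      rw [setLIntegral_const, setLIntegral_const, mul_comm]
    have hpos0 : ∀ y, KernelPositive (η y) (fun x => (fun p : X × Y => η p.2) (x, y)) := by
      intro y f _
      simp only []
      rw [integral_const_mul]
      exact mul_self_nonneg _
    exact main_lemma π κ hκmeas hκprob η hηmeas hηprob hκdis hηdis
      (fun p => η p.2) (hηmeas.comp measurable_snd) (fun p => hηprob p.2) hrev0 hpos0
  · intro h
    exact main_lemma π κ hκmeas hκprob η hηmeas hηprob hκdis hηdis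
      KH₂ hKH₂meas hKH₂prob (fun y => (h y).1) (fun y => (h y).2)


end
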